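/- The reproducing kernel of the true polyanalytic Fock space of order n+1 admits the explicit expansion K^n(w,z) = (1/n!) e^{π|w|²} (d/dw)^n [ e^{π z̄ w − π|w|²} (w−z)^n ] = ∑_{k=0}^n binom(n,k) (1/k!) (−π|w−z|²)^k e^{π z̄ w}. -/

import Mathlib

open ComplexConjugate

noncomputable section

private lemma trinom (n k j : ℕ) :
    n.choose k * (n - k).choose j = n.choose j * (n - j).choose k := by
  rcases le_or_gt (k + j) n with h | h
  · have key : ∀ a b : ℕ, a + b ≤ n →
        n.choose a * (n - a).choose b * (a.factorial * b.factorial * (n - a - b).factorial)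
          = n.factorial := by
      intro a b hab
      have h1 : (n - a).choose b * b.factorial * (n - a - b).factorial = (n - a).factorial :=
        Nat.choose_mul_factorial_mul_factorial (by omega)
      have h2 : n.choose a * a.factorial * (n - a).factorial = n.factorial :=
        Nat.choose_mul_factorial_mul_factorial (by omega)
      calc n.choose a * (n - a).choose b * (a.factorial * b.factorial * (n - a - b).factorial)
          = n.choose a * a.factorial * ((n - a).choose b * b.factorial * (n - a - b).factorial) := by
            ring
        _ = n.choose a * a.factorial * (n - a).factorial := by rw [h1]
        _ = n.factorial := h2
    have e1 := key k j h
    have e2 := key j k (by omega)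
    have hM : n - j - k = n - k - j := by omega
    rw [hM] at e2
    have hpos : 0 < k.factorial * j.factorial * (n - k - j).factorial :=
      Nat.mul_pos (Nat.mul_pos k.factorial_pos j.factorial_pos) (n - k - j).factorial_pos
    apply Nat.eq_of_mul_eq_mul_right hpos
    rw [e1, ← e2]; ring
  · have z1 : n.choose k * (n - k).choose j = 0 := by
      rcases le_or_gt k n with hk | hk
      · have : n - k < j := by omega
        simp [Nat.choose_eq_zero_of_lt this]
      · simp [Nat.choose_eq_zero_of_lt hk]
    have z2 : n.choose j * (n - j).choose k = 0 := by
      rcases le_or_gt j n with hj | hj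
      · have : n - j < k := by omega
        simp [Nat.choose_eq_zero_of_lt this]
      · simp [Nat.choose_eq_zero_of_lt hj]
    rw [z1, z2]

private lemma iterDeriv_expr (a z : ℂ) (n : ℕ) :
    ∀ (m : ℕ) (w : ℂ), iteratedDeriv m (fun u => Complex.exp (a * u) * (u - z) ^ n) w =
    ∑ j ∈ Finset.range (m + 1), (m.choose j : ℂ) * a ^ (m - j) *
      (n.descFactorial j : ℂ) * (w - z) ^ (n - j) * Complex.exp (a * w) := by
  intro m
  induction m with
  | zero =>
    intro w
    simp [mul_comm]
  | succ m ih =>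
    intro w
    rw [iteratedDeriv_succ, funext ih]
    have hder : HasDerivAt (fun w : ℂ => ∑ j ∈ Finset.range (m + 1),
        (m.choose j : ℂ) * a ^ (m - j) * (n.descFactorial j : ℂ) * (w - z) ^ (n - j) *
          Complex.exp (a * w))
        (∑ j ∈ Finset.range (m + 1), (m.choose j : ℂ) * a ^ (m - j) * (n.descFactorial j : ℂ) *
          (((n - j : ℕ) : ℂ) * (w - z) ^ (n - j - 1) * Complex.exp (a * w)
            + (w - z) ^ (n - j) * (Complex.exp (a * w) * a))) w := by
      apply HasDerivAt.fun_sum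
      intro j _
      have h1 : HasDerivAt (fun w : ℂ => (w - z) ^ (n - j))
          (((n - j : ℕ) : ℂ) * (w - z) ^ (n - j - 1)) w := by
        simpa using ((hasDerivAt_id w).sub_const z).fun_pow (n - j)
      have h2 : HasDerivAt (fun w : ℂ => Complex.exp (a * w))
          (Complex.exp (a * w) * a) w := by
        simpa [mul_comm] using (((hasDerivAt_id w).const_mul a).cexp)
      have h3 := (h1.fun_mul h2).const_mul ((m.choose j : ℂ) * a ^ (m - j) * (n.descFactorial j : ℂ))
      exact h3.congr_of_eventuallyEq (Filter.Eventually.of_forall fun y => by ring)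
    rw [hder.deriv]
    -- now pure algebra on sums
    have hS : (∑ j ∈ Finset.range (m + 1), (m.choose j : ℂ) * a ^ (m - j) *
          (n.descFactorial j : ℂ) *
          (((n - j : ℕ) : ℂ) * (w - z) ^ (n - j - 1) * Complex.exp (a * w)
            + (w - z) ^ (n - j) * (Complex.exp (a * w) * a)))
        = (∑ j ∈ Finset.range (m + 1), (m.choose j : ℂ) * a ^ (m - j) *
            (n.descFactorial (j + 1) : ℂ) * (w - z) ^ (n - (j + 1)) * Complex.exp (a * w))
          + ∑ j ∈ Finset.range (m + 2), (m.choose j : ℂ) * a ^ (m + 1 - j) *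
            (n.descFactorial j : ℂ) * (w - z) ^ (n - j) * Complex.exp (a * w) := by
      rw [Finset.sum_range_succ (f := fun j => (m.choose j : ℂ) * a ^ (m + 1 - j) *
            (n.descFactorial j : ℂ) * (w - z) ^ (n - j) * Complex.exp (a * w)) (m + 1)]
      rw [Nat.choose_succ_self]
      push_cast
      rw [zero_mul, zero_mul, zero_mul, zero_mul, add_zero, ← Finset.sum_add_distrib]
      apply Finset.sum_congr rfl
      intro j hj
      have hjm : j ≤ m := Nat.lt_succ_iff.mp (Finset.mem_range.mp hj)
      have hd : (n.descFactorial (j + 1) : ℂ) = ((n - j : ℕ) : ℂ) * (n.descFactorial j : ℂ) := by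
        rw [Nat.descFactorial_succ]; push_cast; ring
      have he : a ^ (m + 1 - j) = a ^ (m - j) * a := by
        rw [← pow_succ, Nat.sub_add_comm hjm]
      have hn : n - (j + 1) = n - j - 1 := by omega
      rw [hd, he, hn]
      ring
    rw [hS]
    -- reassemble to the target sum
    rw [Finset.sum_range_succ' (f := fun j => ((m + 1).choose j : ℂ) * a ^ (m + 1 - j) *
          (n.descFactorial j : ℂ) * (w - z) ^ (n - j) * Complex.exp (a * w)) (m + 1)]
    rw [Finset.sum_range_succ' (f := fun j => (m.choose j : ℂ) * a ^ (m + 1 - j) *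
          (n.descFactorial j : ℂ) * (w - z) ^ (n - j) * Complex.exp (a * w)) (m + 1)]
    have h0 : ((m.choose 0 : ℕ) : ℂ) * a ^ (m + 1 - 0) * (n.descFactorial 0 : ℂ) *
        (w - z) ^ (n - 0) * Complex.exp (a * w)
        = (((m + 1).choose 0 : ℕ) : ℂ) * a ^ (m + 1 - 0) * (n.descFactorial 0 : ℂ) *
          (w - z) ^ (n - 0) * Complex.exp (a * w) := by
      simp
    rw [h0, ← add_assoc]
    congr 1
    rw [← Finset.sum_add_distrib]
    apply Finset.sum_congr rfl
    intro j hj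
    have hjm : j ≤ m := Nat.lt_succ_iff.mp (Finset.mem_range.mp hj)
    have hc : (((m + 1).choose (j + 1) : ℕ) : ℂ)
        = ((m.choose j : ℕ) : ℂ) + ((m.choose (j + 1) : ℕ) : ℂ) := by
      rw [Nat.choose_succ_succ']; push_cast; ring
    have he : m + 1 - (j + 1) = m - j := by omega
    rw [hc, he]
    ring

/-- Explicit expansion of the reproducing kernel of the true polyanalytic Fock space:
`(1/n!) e^{π|w|²}(d/dw)^n[e^{π z̄ w - π|w|²}(w-z)^n]
  = ∑_{k=0}^n C(n,k)(1/k!)(-π|w-z|²)^k e^{π z̄ w}`,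
where the left-hand side is interpreted via the Leibniz rule treating `w̄` as constant. -/
theorem polyFock_kernel_expansion (n : ℕ) (w z : ℂ) :
    (1 / (n.factorial : ℂ)) *
      ∑ k ∈ Finset.range (n + 1), (n.choose k : ℂ) * (-Real.pi * conj w) ^ k *
        iteratedDeriv (n - k)
          (fun u => Complex.exp (Real.pi * conj z * u) * (u - z) ^ n) w =
    ∑ k ∈ Finset.range (n + 1), (n.choose k : ℂ) * (1 / (k.factorial : ℂ)) *
      (-Real.pi * Complex.normSq (w - z)) ^ k *
      Complex.exp (Real.pi * conj z * w) := by
  set a : ℂ := (Real.pi : ℂ) * conj z with ha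
  set b : ℂ := -(Real.pi : ℂ) * conj w with hb
  set E : ℂ := Complex.exp (a * w) with hE
  -- Step 1: expand each iterated derivative and extend the inner sum to range (n+1)
  have step1 : ∀ k ∈ Finset.range (n + 1),
      (n.choose k : ℂ) * b ^ k * iteratedDeriv (n - k)
          (fun u => Complex.exp (a * u) * (u - z) ^ n) w
      = ∑ j ∈ Finset.range (n + 1), (n.choose k : ℂ) * b ^ k *
          (((n - k).choose j : ℂ) * a ^ (n - j - k) * (n.descFactorial j : ℂ) *
            (w - z) ^ (n - j) * E) := by
    intro k hk
    have hkn : k ≤ n := Nat.lt_succ_iff.mp (Finset.mem_range.mp hk)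
    rw [iterDeriv_expr a z n (n - k) w]
    rw [Finset.mul_sum]
    rw [← Finset.sum_subset (Finset.range_subset_range.mpr (by omega : n - k + 1 ≤ n + 1))]
    · apply Finset.sum_congr rfl
      intro j hj
      have hjk : j ≤ n - k := Nat.lt_succ_iff.mp (Finset.mem_range.mp hj)
      have : n - k - j = n - j - k := by omega
      rw [this]
    · intro j hj hj'
      have : n - k < j := by
        simp only [Finset.mem_range] at hj hj'
        omega
      simp [Nat.choose_eq_zero_of_lt this]
  rw [Finset.sum_congr rfl step1, Finset.mul_sum]
  simp only [Finset.mul_sum]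
  rw [Finset.sum_comm]
  -- Step 2: for each j, collapse the inner sum over k via the binomial theorem
  have step2 : ∀ j ∈ Finset.range (n + 1),
      (∑ k ∈ Finset.range (n + 1), (1 / (n.factorial : ℂ)) *
        ((n.choose k : ℂ) * b ^ k * (((n - k).choose j : ℂ) * a ^ (n - j - k) *
          (n.descFactorial j : ℂ) * (w - z) ^ (n - j) * E)))
      = ((n.choose (n - j) : ℂ) * (1 / ((n - j).factorial : ℂ)) *
          (-Real.pi * Complex.normSq (w - z)) ^ (n - j) * E) := by
    intro j hj
    have hjn : j ≤ n := Nat.lt_succ_iff.mp (Finset.mem_range.mp hj)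
    have hswap : ∀ k, ((n.choose k : ℕ) : ℂ) * (((n - k).choose j : ℕ) : ℂ)
        = ((n.choose j : ℕ) : ℂ) * (((n - j).choose k : ℕ) : ℂ) := by
      intro k
      have := trinom n k j
      exact_mod_cast this
    have hsum : (∑ k ∈ Finset.range (n + 1), (1 / (n.factorial : ℂ)) *
        ((n.choose k : ℂ) * b ^ k * (((n - k).choose j : ℂ) * a ^ (n - j - k) *
          (n.descFactorial j : ℂ) * (w - z) ^ (n - j) * E)))
        = (1 / (n.factorial : ℂ)) * (n.choose j : ℂ) * (n.descFactorial j : ℂ) *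
            (w - z) ^ (n - j) * E *
          ∑ k ∈ Finset.range (n + 1), b ^ k * a ^ (n - j - k) * ((n - j).choose k : ℂ) := by
      rw [Finset.mul_sum]
      apply Finset.sum_congr rfl
      intro k _
      have := hswap k
      calc (1 / (n.factorial : ℂ)) *
          ((n.choose k : ℂ) * b ^ k * (((n - k).choose j : ℂ) * a ^ (n - j - k) *
            (n.descFactorial j : ℂ) * (w - z) ^ (n - j) * E))
          = ((n.choose k : ℂ) * ((n - k).choose j : ℂ)) * ((1 / (n.factorial : ℂ)) * b ^ k *
              (a ^ (n - j - k) * (n.descFactorial j : ℂ) * (w - z) ^ (n - j) * E)) := by ring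
        _ = ((n.choose j : ℂ) * ((n - j).choose k : ℂ)) * ((1 / (n.factorial : ℂ)) * b ^ k *
              (a ^ (n - j - k) * (n.descFactorial j : ℂ) * (w - z) ^ (n - j) * E)) := by rw [this]
        _ = (1 / (n.factorial : ℂ)) * (n.choose j : ℂ) * (n.descFactorial j : ℂ) *
              (w - z) ^ (n - j) * E * (b ^ k * a ^ (n - j - k) * ((n - j).choose k : ℂ)) := by
            ring
    rw [hsum]
    have hbin : (∑ k ∈ Finset.range (n + 1), b ^ k * a ^ (n - j - k) * ((n - j).choose k : ℂ))
        = (b + a) ^ (n - j) := by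
      rw [add_pow]
      symm
      apply Finset.sum_subset (Finset.range_subset_range.mpr (by omega : n - j + 1 ≤ n + 1))
      intro k _ hk'
      have : n - j < k := by
        simp only [Finset.mem_range] at hk' ⊢
        omega
      simp [Nat.choose_eq_zero_of_lt this]
    rw [hbin]
    have hba : b + a = -(Real.pi : ℂ) * conj (w - z) := by
      rw [ha, hb, map_sub]; ring
    have hpow : (w - z) ^ (n - j) * (b + a) ^ (n - j)
        = (-Real.pi * Complex.normSq (w - z)) ^ (n - j) := by
      rw [hba, ← mul_pow]
      congr 1
      rw [show (w - z) * (-(Real.pi : ℂ) * conj (w - z))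
            = -(Real.pi : ℂ) * ((w - z) * conj (w - z)) by ring, Complex.mul_conj]
    have hcoef : (1 / (n.factorial : ℂ)) * (n.choose j : ℂ) * (n.descFactorial j : ℂ)
        = (n.choose (n - j) : ℂ) * (1 / ((n - j).factorial : ℂ)) := by
      have hfd : ((n - j).factorial : ℂ) * (n.descFactorial j : ℂ) = (n.factorial : ℂ) := by
        exact_mod_cast congrArg (Nat.cast : ℕ → ℂ) (Nat.factorial_mul_descFactorial hjn)
      have hcs : ((n.choose (n - j) : ℕ) : ℂ) = ((n.choose j : ℕ) : ℂ) := by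
        exact_mod_cast congrArg (Nat.cast : ℕ → ℂ) (Nat.choose_symm hjn)
      have hn0 : (n.factorial : ℂ) ≠ 0 := Nat.cast_ne_zero.mpr n.factorial_ne_zero
      have hnj0 : ((n - j).factorial : ℂ) ≠ 0 := Nat.cast_ne_zero.mpr (n - j).factorial_ne_zero
      rw [hcs]
      field_simp
      rw [← hfd]
      ring
    calc (1 / (n.factorial : ℂ)) * (n.choose j : ℂ) * (n.descFactorial j : ℂ) *
          (w - z) ^ (n - j) * E * (b + a) ^ (n - j)
        = ((1 / (n.factorial : ℂ)) * (n.choose j : ℂ) * (n.descFactorial j : ℂ)) *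
            ((w - z) ^ (n - j) * (b + a) ^ (n - j)) * E := by ring
      _ = ((n.choose (n - j) : ℂ) * (1 / ((n - j).factorial : ℂ))) *
            ((-Real.pi * Complex.normSq (w - z)) ^ (n - j)) * E := by rw [hcoef, hpow]
      _ = (n.choose (n - j) : ℂ) * (1 / ((n - j).factorial : ℂ)) *
            (-Real.pi * Complex.normSq (w - z)) ^ (n - j) * E := by ring
  rw [Finset.sum_congr rfl step2]
  -- Step 3: reflect the sum
  rw [← Finset.sum_range_reflect (fun k => (n.choose k : ℂ) * (1 / (k.factorial : ℂ)) *
      (-Real.pi * Complex.normSq (w - z)) ^ k * E) (n + 1)]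
  apply Finset.sum_congr rfl
  intro j hj
  have : n + 1 - 1 - j = n - j := by omega
  rw [this]
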